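/- Let μ be a finite measure on [0,1], let g : [0,1] → ℝ be a bounded measurable function for which there exists θ̂ ∈ [0,1] such that g(θ') ≥ 0 for all θ' < θ̂ and g(θ') ≤ 0 for all θ' > θ̂, with ∫_{[0,1]} g dμ ≥ 0, and let q : [0,1] → [0,∞) be a bounded nonincreasing measurable function. Then ∫_{[0,1]} g·q dμ ≥ 0. -/
import Mathlib


open MeasureTheory

noncomputable section

abbrev Θ : Type := ↥(Set.Icc (0:ℝ) 1)

theorem stmt12
    (μ : Measure Θ) [IsFiniteMeasure μ]
    (g : Θ → ℝ) (hgm : Measurable g) (hgbdd : ∃ M : ℝ, ∀ x, |g x| ≤ M)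
    -- g crosses zero at most once, from above
    (θh : Θ)
    (hg_pos : ∀ θ' : Θ, θ' < θh → 0 ≤ g θ')
    (hg_neg : ∀ θ' : Θ, θh < θ' → g θ' ≤ 0)
    (hgint : 0 ≤ ∫ x, g x ∂μ)
    (q : Θ → ℝ) (hqm : Measurable q) (hq0 : ∀ x, 0 ≤ q x)
    (hqbdd : ∃ M : ℝ, ∀ x, q x ≤ M)
    -- q is nonincreasing
    (hq_anti : Antitone q) :
    0 ≤ ∫ x, g x * q x ∂μ := by
  obtain ⟨M, hM⟩ := hgbdd
  obtain ⟨N, hN⟩ := hqbdd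
  have hgi : Integrable g μ := by
    refine ⟨hgm.aestronglyMeasurable, ?_⟩
    exact HasFiniteIntegral.of_bounded (C := M) (Filter.Eventually.of_forall fun x => by
      simpa [Real.norm_eq_abs] using hM x)
  have hgqi : Integrable (fun x => g x * q x) μ := by
    refine ⟨(hgm.mul hqm).aestronglyMeasurable, ?_⟩
    refine HasFiniteIntegral.of_bounded (C := M * N) (Filter.Eventually.of_forall fun x => ?_)
    have h1 : |g x * q x| = |g x| * q x := by
      rw [abs_mul, abs_of_nonneg (hq0 x)]
    rw [Real.norm_eq_abs, h1]
    exact mul_le_mul (hM x) (hN x) (hq0 x) ((abs_nonneg _).trans (hM x))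
  have hpt : ∀ x, g x * q θh ≤ g x * q x := by
    intro x
    rcases lt_trichotomy x θh with h | h | h
    · exact mul_le_mul_of_nonneg_left (hq_anti h.le) (hg_pos x h)
    · rw [h]
    · exact mul_le_mul_of_nonpos_left (hq_anti h.le) (hg_neg x h)
  have hint : ∫ x, g x * q θh ∂μ ≤ ∫ x, g x * q x ∂μ := by
    refine integral_mono (hgi.mul_const _) hgqi hpt
  have h0 : 0 ≤ ∫ x, g x * q θh ∂μ := by
    rw [integral_mul_const]
    exact mul_nonneg hgint (hq0 θh)
  linarith

end
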